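/- Let n ≥ 3 and let x_1 ≤ x_2 ≤ … ≤ x_{n−1} be positive integers with Σ_{1≤i<j≤n−1} 1/(x_i x_j) = 1 − 1/L, where L = lcm over all pairs 1 ≤ i < j ≤ n−1 of the products x_i x_j. Set x_n = L · Σ_{i=1}^{n−1} 1/x_i and define the n-tuple (x_1*, …, x_n*) = (x_1, …, x_{n−1}, x_n + 1). Then Σ_{1≤i<j≤n} 1/(x_i* x_j*) = 1 − 1/L*, where L* = lcm over all pairs 1 ≤ i < j ≤ n of the products x_i* x_j*; moreover L* = (x_n + 1)·L. -/

import Mathlib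

private lemma lcm_mul_const_aux {ι : Type*} {s : Finset ι} (hs : s.Nonempty) (f : ι → ℕ) (c : ℕ) :
    s.lcm (fun i => f i * c) = s.lcm f * c := by
  induction hs using Finset.Nonempty.cons_induction with
  | singleton a => simp [Finset.lcm_singleton]
  | cons a s ha hs ih =>
      classical
      rw [Finset.cons_eq_insert, Finset.lcm_insert, Finset.lcm_insert, ih,
        lcm_eq_nat_lcm, lcm_eq_nat_lcm, Nat.lcm_mul_right]

theorem stmt16 (n : ℕ) (hn : 3 ≤ n) (x : ℕ → ℕ)
    (hpos : ∀ i ∈ Finset.Icc 1 (n - 1), 0 < x i)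
    (hmono : ∀ i ∈ Finset.Icc 1 (n - 1), ∀ j ∈ Finset.Icc 1 (n - 1), i ≤ j → x i ≤ x j)
    (L : ℕ)
    (hL : L = ((Finset.Icc 1 (n - 1) ×ˢ Finset.Icc 1 (n - 1)).filter
        (fun p => p.1 < p.2)).lcm (fun p => x p.1 * x p.2))
    (h : ∑ p ∈ (Finset.Icc 1 (n - 1) ×ˢ Finset.Icc 1 (n - 1)).filter
        (fun p => p.1 < p.2), (1 : ℚ) / (x p.1 * x p.2) = 1 - 1 / L)
    (xn : ℕ) (hxn : (xn : ℚ) = L * ∑ i ∈ Finset.Icc 1 (n - 1), (1 : ℚ) / x i)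
    (xstar : ℕ → ℕ) (hxstar : xstar = Function.update x n (xn + 1))
    (Lstar : ℕ)
    (hLstar : Lstar = ((Finset.Icc 1 n ×ˢ Finset.Icc 1 n).filter
        (fun p => p.1 < p.2)).lcm (fun p => xstar p.1 * xstar p.2)) :
    (∑ p ∈ (Finset.Icc 1 n ×ˢ Finset.Icc 1 n).filter (fun p => p.1 < p.2),
        (1 : ℚ) / (xstar p.1 * xstar p.2) = 1 - 1 / Lstar) ∧
    Lstar = (xn + 1) * L := by
  set A := Finset.Icc 1 (n - 1) with hA
  set P := (A ×ˢ A).filter (fun p => p.1 < p.2) with hP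
  -- xstar agrees with x on A, and xstar n = xn + 1
  have hxsA : ∀ i ∈ A, xstar i = x i := by
    intro i hi
    simp only [hA, Finset.mem_Icc] at hi
    rw [hxstar, Function.update_of_ne (by omega)]
  have hxsn : xstar n = xn + 1 := by rw [hxstar]; simp
  -- A is nonempty
  have hAne : A.Nonempty := ⟨1, by simp [hA]; omega⟩
  -- L is positive
  have hLpos : 0 < L := by
    rcases Nat.eq_zero_or_pos L with h0 | h0
    · exfalso
      rw [hL, Finset.lcm_eq_zero_iff] at h0
      obtain ⟨p, hp, hp0⟩ := h0
      simp only [Finset.mem_coe, hP, Finset.mem_filter, Finset.mem_product] at hp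
      change x p.1 * x p.2 = 0 at hp0
      have := Nat.mul_pos (hpos p.1 hp.1.1) (hpos p.2 hp.1.2)
      omega
    · exact h0
  -- each x i divides L
  have hdvdL : ∀ i ∈ A, x i ∣ L := by
    intro i hi
    simp only [hA, Finset.mem_Icc] at hi
    rcases lt_or_eq_of_le hi.2 with hlt | heq
    · have hpm : (⟨i, n - 1⟩ : ℕ × ℕ) ∈ P := by
        simp only [hP, Finset.mem_filter, Finset.mem_product, hA, Finset.mem_Icc]
        omega
      exact dvd_trans (Dvd.intro _ rfl) (hL ▸ Finset.dvd_lcm hpm)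
    · have hpm : (⟨1, i⟩ : ℕ × ℕ) ∈ P := by
        simp only [hP, Finset.mem_filter, Finset.mem_product, hA, Finset.mem_Icc]
        omega
      exact dvd_trans (Dvd.intro_left _ rfl) (hL ▸ Finset.dvd_lcm hpm)
  set M := A.lcm x with hMdef
  have hMdvd : M ∣ L := Finset.lcm_dvd hdvdL
  have hMpos : 0 < M := Nat.pos_of_dvd_of_pos hMdvd hLpos
  -- xn as a natural-number sum
  have hxnsum : xn = ∑ i ∈ A, L / x i := by
    have hq : (xn : ℚ) = ∑ i ∈ A, ((L / x i : ℕ) : ℚ) := by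
      rw [hxn, Finset.mul_sum]
      refine Finset.sum_congr rfl ?_
      intro i hi
      rw [Nat.cast_div (hdvdL i hi) (by exact_mod_cast (hpos i hi).ne'), mul_one_div]
    exact_mod_cast hq
  -- L / M divides xn
  have hLMdvd : L / M ∣ xn := by
    rw [hxnsum]
    refine Finset.dvd_sum ?_
    intro i hi
    obtain ⟨c, hc⟩ := Finset.dvd_lcm hi (f := x)
    rw [← hMdef] at hc
    obtain ⟨d, hd⟩ := hMdvd
    have hxi : 0 < x i := hpos i hi
    have h1 : L / M = d := by rw [hd, Nat.mul_div_cancel_left _ hMpos]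
    have h2 : L / x i = c * d := by
      rw [hd, hc, mul_assoc, Nat.mul_div_cancel_left _ hxi]
    rw [h1, h2]
    exact Dvd.intro_left c rfl
  -- coprimality
  have hcop : Nat.Coprime (xn + 1) (L / M) := by
    have hd1 := Nat.gcd_dvd_left (xn + 1) (L / M)
    have hd2 := Nat.gcd_dvd_right (xn + 1) (L / M)
    have hdxn : Nat.gcd (xn + 1) (L / M) ∣ xn := dvd_trans hd2 hLMdvd
    have : Nat.gcd (xn + 1) (L / M) ∣ 1 := by
      have := Nat.dvd_sub hd1 hdxn
      simpa using this
    exact Nat.dvd_one.mp this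
  -- key lcm identity
  have hkey : Nat.lcm L (M * (xn + 1)) = (xn + 1) * L := by
    have hLfact : L = (L / M) * M := (Nat.div_mul_cancel hMdvd).symm
    calc Nat.lcm L (M * (xn + 1))
        = Nat.lcm ((L / M) * M) ((xn + 1) * M) := by rw [← hLfact, mul_comm M]
      _ = Nat.lcm (L / M) (xn + 1) * M := Nat.lcm_mul_right _ _ _
      _ = ((L / M) * (xn + 1)) * M := by rw [Nat.Coprime.lcm_eq_mul hcop.symm]
      _ = (xn + 1) * ((L / M) * M) := by ring
      _ = (xn + 1) * L := by rw [← hLfact]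
  -- decomposition of the index set for n
  have hinj : Function.Injective (fun i : ℕ => (i, n)) := by
    intro a b hab
    simpa using congrArg Prod.fst hab
  have hsplit : (Finset.Icc 1 n ×ˢ Finset.Icc 1 n).filter (fun p => p.1 < p.2)
      = P ∪ A.image (fun i => (i, n)) := by
    ext ⟨p1, p2⟩
    simp only [Finset.mem_filter, Finset.mem_product, Finset.mem_Icc, Finset.mem_union,
      Finset.mem_image, hP, hA, Prod.mk.injEq]
    constructor
    · rintro ⟨⟨⟨h1, h2⟩, h3, h4⟩, h5⟩
      by_cases hp2 : p2 = n
      · exact Or.inr ⟨p1, ⟨by omega, by omega⟩, rfl, hp2.symm⟩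
      · exact Or.inl ⟨⟨⟨by omega, by omega⟩, by omega, by omega⟩, h5⟩
    · rintro (⟨⟨⟨h1, h2⟩, h3, h4⟩, h5⟩ | ⟨i, ⟨h1, h2⟩, h3, h4⟩)
      · exact ⟨⟨⟨by omega, by omega⟩, by omega, by omega⟩, h5⟩
      · subst h3; subst h4
        exact ⟨⟨⟨by omega, by omega⟩, by omega, le_refl n⟩, by omega⟩
  have hdisj : Disjoint P (A.image (fun i => (i, n))) := by
    rw [Finset.disjoint_left]
    rintro ⟨p1, p2⟩ hp hq
    simp only [hP, Finset.mem_filter, Finset.mem_product, hA, Finset.mem_Icc] at hp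
    simp only [Finset.mem_image, Prod.mk.injEq, hA, Finset.mem_Icc] at hq
    obtain ⟨i, _, _, h4⟩ := hq
    omega
  -- compute Lstar
  have hLstar2 : Lstar = (xn + 1) * L := by
    rw [hLstar, hsplit, Finset.lcm_union, Finset.lcm_image]
    have e1 : P.lcm (fun p => xstar p.1 * xstar p.2) = L := by
      rw [hL]
      refine Finset.lcm_congr rfl ?_
      intro p hp
      simp only [hP, Finset.mem_filter, Finset.mem_product] at hp
      rw [hxsA p.1 hp.1.1, hxsA p.2 hp.1.2]
    have e2 : A.lcm ((fun p : ℕ × ℕ => xstar p.1 * xstar p.2) ∘ (fun i => (i, n)))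
        = M * (xn + 1) := by
      have : A.lcm ((fun p : ℕ × ℕ => xstar p.1 * xstar p.2) ∘ (fun i => (i, n)))
          = A.lcm (fun i => x i * (xn + 1)) := by
        refine Finset.lcm_congr rfl ?_
        intro i hi
        simp only [Function.comp]
        rw [hxsA i hi, hxsn]
      rw [this, lcm_mul_const_aux hAne]
    rw [e1, e2, lcm_eq_nat_lcm, hkey]
  refine ⟨?_, hLstar2⟩
  -- the sum identity
  have hsum1 : ∑ i ∈ A, (1 : ℚ) / (x i) = xn / L := by
    rw [hxn]
    field_simp
  have hxnpos : (0 : ℚ) < (xn : ℚ) + 1 := by positivity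
  have hLQ : (0 : ℚ) < (L : ℚ) := by exact_mod_cast hLpos
  rw [hsplit, Finset.sum_union hdisj, Finset.sum_image (fun a _ b _ hab => hinj hab)]
  have e1 : ∑ p ∈ P, (1 : ℚ) / (xstar p.1 * xstar p.2) = 1 - 1 / L := by
    rw [← h]
    refine Finset.sum_congr rfl ?_
    intro p hp
    simp only [hP, Finset.mem_filter, Finset.mem_product] at hp
    rw [hxsA p.1 hp.1.1, hxsA p.2 hp.1.2]
  have e2 : ∑ i ∈ A, (1 : ℚ) / (xstar i * xstar n)
      = (xn : ℚ) / (L * (xn + 1)) := by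
    have : ∑ i ∈ A, (1 : ℚ) / (xstar i * xstar n)
        = (∑ i ∈ A, (1 : ℚ) / (x i)) * (1 / ((xn : ℚ) + 1)) := by
      rw [Finset.sum_mul]
      refine Finset.sum_congr rfl ?_
      intro i hi
      rw [hxsA i hi, hxsn, div_mul_div_comm, one_mul]
      push_cast
      rfl
    rw [this, hsum1]
    field_simp
  rw [e1, e2, hLstar2]
  push_cast
  field_simp
  ring
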